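/- Let A be a uniquely clean associative unital k-algebra and let A_t be a formal deformation of A, given by a sequence of k-bilinear maps αᵢ : A × A → A (α₀ the multiplication of A) making A[[t]] an associative unital k[[t]]-algebra with unit 1 via the product whose tᵏ-coefficient on (Σ aₙtⁿ)·(Σ bₚtᵖ) is Σ_{m+n+p=k} α_m(aₙ, bₚ). Then A_t is uniquely clean. -/

import Mathlib

/-- A ring is uniquely clean if every element is the sum of an idempotent and a
unit in exactly one way. -/
def IsUniquelyCleanRing (R : Type*) [Ring R] : Prop :=
  ∀ a : R, ∃! p : R × R, IsIdempotentElem p.1 ∧ IsUnit p.2 ∧ a = p.1 + p.2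

namespace UCaux

section UniquelyClean
variable {R : Type*} [Ring R]

theorem sq_one {e : R} (he : IsIdempotentElem e) : (1 - 2*e) * (1 - 2*e) = 1 := by
  have h : (1 - 2*e) * (1 - 2*e) = 1 - 4*e + 4*(e*e) := by noncomm_ring
  rw [h, he.eq]; abel

theorem unit_one_sub_two {e : R} (he : IsIdempotentElem e) : IsUnit (1 - 2*e) :=
  ⟨⟨1 - 2*e, 1 - 2*e, sq_one he, sq_one he⟩, rfl⟩

theorem unique (hA : IsUniquelyCleanRing R) {a e u f v : R}
    (he : IsIdempotentElem e) (hu : IsUnit u) (hf : IsIdempotentElem f) (hv : IsUnit v)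
    (h1 : a = e + u) (h2 : a = f + v) : e = f ∧ u = v := by
  obtain ⟨p, -, hpu⟩ := hA a
  have h1' := hpu (e, u) ⟨he, hu, h1⟩
  have h2' := hpu (f, v) ⟨hf, hv, h2⟩
  rw [← h2'] at h1'
  exact ⟨congrArg Prod.fst h1', congrArg Prod.snd h1'⟩

theorem er_ere (hA : IsUniquelyCleanRing R) {e : R} (he : IsIdempotentElem e) (r : R) :
    e * r = e * r * e := by
  set n : R := e * r * (1 - e) with hn
  have hne : n * e = 0 := by
    have h0 : (1 - e) * e = 0 := by
      have := he.eq
      simp [sub_mul, this]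
    rw [hn, mul_assoc, h0, mul_zero]
  have hen : e * n = n := by
    rw [hn, ← mul_assoc, ← mul_assoc, he.eq]
  have hnn : n * n = 0 := by
    calc n * n = n * e * (r * (1-e)) := by rw [hn]; noncomm_ring
    _ = 0 := by rw [hne, zero_mul]
  have hf : IsIdempotentElem (e + n) := by
    show (e+n)*(e+n) = e+n
    rw [add_mul, mul_add, mul_add, he.eq, hen, hne, hnn, add_zero, add_zero]
  have hu1 : IsUnit (1 - 2*e) := unit_one_sub_two he
  have h1n : IsUnit (1 + n) := by
    have ha : (1+n) * (1-n) = 1 - n*n := by noncomm_ring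
    have hb : (1-n) * (1+n) = 1 - n*n := by noncomm_ring
    rw [hnn, sub_zero] at ha hb
    exact ⟨⟨1+n, 1-n, ha, hb⟩, rfl⟩
  have hvn : IsUnit (n + 1 - 2*e) := by
    have hprod : (1+n) * (1-2*e) = n + 1 - 2*e - 2*(n*e) := by noncomm_ring
    rw [hne, mul_zero, sub_zero] at hprod
    rw [← hprod]
    exact h1n.mul hu1
  have hd1 : e + n + 1 - 2*e = (e + n) + (1 - 2*e) := by abel
  have hd2 : e + n + 1 - 2*e = e + (n + 1 - 2*e) := by abel
  have huniq := unique hA hf hu1 he hvn hd1 hd2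
  have hn0 : n = 0 := by
    have := huniq.1
    rwa [add_eq_left] at this
  have h0 : e * r * (1 - e) = 0 := by rw [← hn]; exact hn0
  rw [mul_sub, mul_one, sub_eq_zero] at h0
  exact h0

theorem central (hA : IsUniquelyCleanRing R) {e : R} (he : IsIdempotentElem e) (r : R) :
    e * r = r * e := by
  have h1 := er_ere hA he r
  have h2 := er_ere hA he.one_sub r
  have e1 : (1-e)*r = r - e*r := by noncomm_ring
  have e2 : (1-e)*r*(1-e) = r - e*r - r*e + e*r*e := by noncomm_ring
  rw [e2, e1] at h2
  have h6 : r - e*r - r*e + e*r*e - (r - e*r) = e*r*e - r*e := by abel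
  rw [← h2, sub_self] at h6
  have h7 : e*r*e = r*e := sub_eq_zero.mp h6.symm
  exact h1.trans h7

end UniquelyClean

section Build
variable {A : Type*} [Ring A]

def buildAux (Φ : (ℕ → A) → ℕ → A) : ℕ → ℕ → A
  | 0 => fun _ => 0
  | N+1 => Function.update (buildAux Φ N) N (Φ (buildAux Φ N) N)

def build (Φ : (ℕ → A) → ℕ → A) (n : ℕ) : A := buildAux Φ (n+1) n

theorem buildAux_stable (Φ : (ℕ → A) → ℕ → A) :
    ∀ N n, n < N → buildAux Φ N n = build Φ n := by
  intro N
  induction N with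
  | zero => omega
  | succ N ih =>
    intro n hn
    rcases Nat.lt_succ_iff_lt_or_eq.mp hn with h | h
    · rw [buildAux, Function.update_of_ne (by omega), ih n h]
    · subst h; rfl

theorem build_spec (Φ : (ℕ → A) → ℕ → A)
    (hΦ : ∀ f g n, (∀ m, m < n → f m = g m) → Φ f n = Φ g n) (n : ℕ) :
    build Φ n = Φ (build Φ) n := by
  show buildAux Φ (n+1) n = _
  rw [buildAux, Function.update_self]
  exact hΦ _ _ n fun m hm => buildAux_stable Φ n m hm

theorem key_id {e R : A} (he : e*e = e) (hc : e*R = R*e) :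
    e * (R * (1-2*e)) + (R * (1-2*e)) * e + R = R * (1-2*e) := by
  have h1 : e * (R * (1-2*e)) = e*R - 2*(e*R*e) := by noncomm_ring
  have h2 : (R * (1-2*e)) * e = R*e - 2*(R*(e*e)) := by noncomm_ring
  rw [h1, h2, he, hc, mul_assoc R e e, he]
  noncomm_ring

theorem key_id2 {e t R : A} (he : e*e = e) (hc : e*t = t*e)
    (h : t = e*t + t*e + R) : t = R * (1-2*e) := by
  have h2 : e*t + t*e + R - e*t - t*e = R := by abel
  rw [← h] at h2
  rw [← h2, hc]
  have h3 : (t - t*e - t*e) * (1-2*e) = t - 4*(t*e) + 4*(t*e*e) := by noncomm_ring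
  rw [h3, mul_assoc t e e, he]
  abel

end Build

section MulSeq
variable {A : Type*} [Ring A] (α : ℕ → A → A → A)

def mulSeq (f g : ℕ → A) (n : ℕ) : A :=
  ∑ x ∈ Finset.HasAntidiagonal.antidiagonal n, ∑ y ∈ Finset.HasAntidiagonal.antidiagonal x.2, α x.1 (f y.1) (g y.2)

theorem mulSeq_zero (hα0 : ∀ a b : A, α 0 a b = a * b) (f g : ℕ → A) :
    mulSeq α f g 0 = f 0 * g 0 := by
  simp [mulSeq, hα0]

theorem mulSeq_split_r (hα0 : ∀ a b : A, α 0 a b = a * b) (f g : ℕ → A) (n : ℕ) :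
    mulSeq α f g n = f 0 * g n +
      ∑ x ∈ Finset.HasAntidiagonal.antidiagonal n, ∑ y ∈ Finset.HasAntidiagonal.antidiagonal x.2,
        (if y.2 < n then α x.1 (f y.1) (g y.2) else 0) := by
  have hsplit : ∀ x ∈ Finset.HasAntidiagonal.antidiagonal n,
      ∑ y ∈ Finset.HasAntidiagonal.antidiagonal x.2, α x.1 (f y.1) (g y.2)
      = (∑ y ∈ Finset.HasAntidiagonal.antidiagonal x.2, if y.2 < n then α x.1 (f y.1) (g y.2) else 0)
        + (∑ y ∈ Finset.HasAntidiagonal.antidiagonal x.2, if y.2 < n then 0 else α x.1 (f y.1) (g y.2)) := by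
    intro x hx
    rw [← Finset.sum_add_distrib]
    apply Finset.sum_congr rfl
    intro y hy
    by_cases h : y.2 < n <;> simp [h]
  rw [mulSeq, Finset.sum_congr rfl hsplit, Finset.sum_add_distrib]
  have hrest : (∑ x ∈ Finset.HasAntidiagonal.antidiagonal n, ∑ y ∈ Finset.HasAntidiagonal.antidiagonal x.2,
      if y.2 < n then 0 else α x.1 (f y.1) (g y.2)) = f 0 * g n := by
    rw [Finset.sum_eq_single_of_mem ((0:ℕ), n) (Finset.HasAntidiagonal.mem_antidiagonal.mpr (by simp))]
    · rw [Finset.sum_eq_single_of_mem ((0:ℕ), n) (Finset.HasAntidiagonal.mem_antidiagonal.mpr (by simp))]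
      · simp [hα0]
      · intro y hy hne
        have hy' := Finset.HasAntidiagonal.mem_antidiagonal.mp hy
        have h2 : y.2 < n := by
          rcases Nat.lt_or_ge y.2 n with h | h
          · exact h
          · exact absurd (Prod.ext (by omega) (by omega)) hne
        simp [h2]
    · intro x hx hne
      have hx' := Finset.HasAntidiagonal.mem_antidiagonal.mp hx
      apply Finset.sum_eq_zero
      intro y hy
      have hy' := Finset.HasAntidiagonal.mem_antidiagonal.mp hy
      have hx1 : x.1 ≠ 0 := fun h => hne (Prod.ext h (by omega))
      have h2 : y.2 < n := by omega
      simp [h2]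
  rw [hrest, add_comm]

theorem mulSeq_split_l (hα0 : ∀ a b : A, α 0 a b = a * b) (f g : ℕ → A) (n : ℕ) :
    mulSeq α f g n =
      (∑ x ∈ Finset.HasAntidiagonal.antidiagonal n, ∑ y ∈ Finset.HasAntidiagonal.antidiagonal x.2,
        (if y.1 < n then α x.1 (f y.1) (g y.2) else 0)) + f n * g 0 := by
  have hsplit : ∀ x ∈ Finset.HasAntidiagonal.antidiagonal n,
      ∑ y ∈ Finset.HasAntidiagonal.antidiagonal x.2, α x.1 (f y.1) (g y.2)
      = (∑ y ∈ Finset.HasAntidiagonal.antidiagonal x.2, if y.1 < n then α x.1 (f y.1) (g y.2) else 0)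
        + (∑ y ∈ Finset.HasAntidiagonal.antidiagonal x.2, if y.1 < n then 0 else α x.1 (f y.1) (g y.2)) := by
    intro x hx
    rw [← Finset.sum_add_distrib]
    apply Finset.sum_congr rfl
    intro y hy
    by_cases h : y.1 < n <;> simp [h]
  rw [mulSeq, Finset.sum_congr rfl hsplit, Finset.sum_add_distrib]
  have hrest : (∑ x ∈ Finset.HasAntidiagonal.antidiagonal n, ∑ y ∈ Finset.HasAntidiagonal.antidiagonal x.2,
      if y.1 < n then 0 else α x.1 (f y.1) (g y.2)) = f n * g 0 := by
    rw [Finset.sum_eq_single_of_mem ((0:ℕ), n) (Finset.HasAntidiagonal.mem_antidiagonal.mpr (by simp))]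
    · rw [Finset.sum_eq_single_of_mem ((n:ℕ), 0) (Finset.HasAntidiagonal.mem_antidiagonal.mpr (by simp))]
      · simp [hα0]
      · intro y hy hne
        have hy' := Finset.HasAntidiagonal.mem_antidiagonal.mp hy
        have h2 : y.1 < n := by
          rcases Nat.lt_or_ge y.1 n with h | h
          · exact h
          · exact absurd (Prod.ext (by omega) (by omega)) hne
        simp [h2]
    · intro x hx hne
      have hx' := Finset.HasAntidiagonal.mem_antidiagonal.mp hx
      apply Finset.sum_eq_zero
      intro y hy
      have hy' := Finset.HasAntidiagonal.mem_antidiagonal.mp hy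
      have hx1 : x.1 ≠ 0 := fun h => hne (Prod.ext h (by omega))
      have h2 : y.1 < n := by omega
      simp [h2]
  rw [hrest]

theorem inner_split (hα0 : ∀ a b : A, α 0 a b = a * b) (f g : ℕ → A) {n : ℕ}
    (hn : 0 < n) :
    (∑ x ∈ Finset.HasAntidiagonal.antidiagonal n, ∑ y ∈ Finset.HasAntidiagonal.antidiagonal x.2,
      (if y.2 < n then α x.1 (f y.1) (g y.2) else 0)) =
    f n * g 0 + ∑ x ∈ Finset.HasAntidiagonal.antidiagonal n, ∑ y ∈ Finset.HasAntidiagonal.antidiagonal x.2,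
      (if y.1 < n ∧ y.2 < n then α x.1 (f y.1) (g y.2) else 0) := by
  have hsplit : ∀ x ∈ Finset.HasAntidiagonal.antidiagonal n,
      (∑ y ∈ Finset.HasAntidiagonal.antidiagonal x.2, if y.2 < n then α x.1 (f y.1) (g y.2) else 0)
      = (∑ y ∈ Finset.HasAntidiagonal.antidiagonal x.2, if y.1 < n ∧ y.2 < n then α x.1 (f y.1) (g y.2) else 0)
        + (∑ y ∈ Finset.HasAntidiagonal.antidiagonal x.2,
            if ¬ y.1 < n ∧ y.2 < n then α x.1 (f y.1) (g y.2) else 0) := by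
    intro x hx
    rw [← Finset.sum_add_distrib]
    apply Finset.sum_congr rfl
    intro y hy
    by_cases h1 : y.1 < n <;> by_cases h2 : y.2 < n <;> simp [h1, h2]
  rw [Finset.sum_congr rfl hsplit, Finset.sum_add_distrib]
  have hrest : (∑ x ∈ Finset.HasAntidiagonal.antidiagonal n, ∑ y ∈ Finset.HasAntidiagonal.antidiagonal x.2,
      if ¬ y.1 < n ∧ y.2 < n then α x.1 (f y.1) (g y.2) else 0) = f n * g 0 := by
    rw [Finset.sum_eq_single_of_mem ((0:ℕ), n) (Finset.HasAntidiagonal.mem_antidiagonal.mpr (by simp))]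
    · rw [Finset.sum_eq_single_of_mem ((n:ℕ), 0) (Finset.HasAntidiagonal.mem_antidiagonal.mpr (by simp))]
      · simp [hα0, hn]
      · intro y hy hne
        have hy' := Finset.HasAntidiagonal.mem_antidiagonal.mp hy
        have h2 : y.1 < n := by
          rcases Nat.lt_or_ge y.1 n with h | h
          · exact h
          · exact absurd (Prod.ext (by omega) (by omega)) hne
        simp [h2]
    · intro x hx hne
      have hx' := Finset.HasAntidiagonal.mem_antidiagonal.mp hx
      apply Finset.sum_eq_zero
      intro y hy
      have hy' := Finset.HasAntidiagonal.mem_antidiagonal.mp hy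
      have hx1 : x.1 ≠ 0 := fun h => hne (Prod.ext h (by omega))
      have h2 : y.1 < n := by omega
      simp [h2]
  rw [hrest, add_comm]

/-- The Φ functional for the idempotent lift. -/
def idemPhi (e : A) : (ℕ → A) → ℕ → A := fun g m =>
  if m = 0 then e else
    (∑ x ∈ Finset.HasAntidiagonal.antidiagonal m, ∑ y ∈ Finset.HasAntidiagonal.antidiagonal x.2,
      if y.1 < m ∧ y.2 < m then α x.1 (g y.1) (g y.2) else 0) * (1 - 2*e)

theorem idemPhi_dep (e : A) : ∀ (g g' : ℕ → A) m,
    (∀ j, j < m → g j = g' j) → idemPhi α e g m = idemPhi α e g' m := by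
  intro g g' m h
  unfold idemPhi
  by_cases hm : m = 0
  · simp [hm]
  · rw [if_neg hm, if_neg hm]
    congr 1
    refine Finset.sum_congr rfl fun x hx => Finset.sum_congr rfl fun y hy => ?_
    by_cases hy' : y.1 < m ∧ y.2 < m
    · rw [if_pos hy', if_pos hy', h _ hy'.1, h _ hy'.2]
    · rw [if_neg hy', if_neg hy']

def idemSeq (e : A) : ℕ → A := build (idemPhi α e)

theorem idemSeq_zero (e : A) : idemSeq α e 0 = e := by
  rw [idemSeq, build_spec _ (idemPhi_dep α e), idemPhi, if_pos rfl]

theorem idemSeq_succ (e : A) {n : ℕ} (hn : 0 < n) :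
    idemSeq α e n = (∑ x ∈ Finset.HasAntidiagonal.antidiagonal n, ∑ y ∈ Finset.HasAntidiagonal.antidiagonal x.2,
      if y.1 < n ∧ y.2 < n then α x.1 (idemSeq α e y.1) (idemSeq α e y.2) else 0) * (1 - 2*e) := by
  rw [idemSeq, build_spec _ (idemPhi_dep α e), idemPhi, if_neg (by omega)]

theorem idemSeq_isIdem (hα0 : ∀ a b : A, α 0 a b = a * b) {e : A} (he : e*e = e)
    (hc : ∀ z : A, e*z = z*e) :
    mulSeq α (idemSeq α e) (idemSeq α e) = idemSeq α e := by
  funext n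
  rcases Nat.eq_zero_or_pos n with hn | hn
  · subst hn
    rw [mulSeq_zero α hα0, idemSeq_zero, he]
  · rw [mulSeq_split_r α hα0 _ _, inner_split α hα0 _ _ hn, idemSeq_zero,
      idemSeq_succ α e hn, ← add_assoc]
    exact key_id he (hc _)

theorem idem_unique (hα0 : ∀ a b : A, α 0 a b = a * b) {e : A} (he : e*e = e)
    (hc : ∀ z : A, e*z = z*e) (g : ℕ → A)
    (hg : mulSeq α g g = g) (hg0 : g 0 = e) : g = idemSeq α e := by
  funext n
  induction n using Nat.strong_induction_on with
  | _ n ih =>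
    rcases Nat.eq_zero_or_pos n with hn | hn
    · subst hn; rw [hg0, idemSeq_zero]
    · have hsum : g n = e * g n + g n * e +
          (∑ x ∈ Finset.HasAntidiagonal.antidiagonal n, ∑ y ∈ Finset.HasAntidiagonal.antidiagonal x.2,
            if y.1 < n ∧ y.2 < n then α x.1 (g y.1) (g y.2) else 0) := by
        conv_lhs => rw [← congrFun hg n]
        rw [mulSeq_split_r α hα0 _ _, inner_split α hα0 _ _ hn, hg0, ← add_assoc]
      have h2 := key_id2 he (hc _) hsum
      rw [h2, idemSeq_succ α e hn]
      congr 1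
      refine Finset.sum_congr rfl fun x hx => Finset.sum_congr rfl fun y hy => ?_
      by_cases hy' : y.1 < n ∧ y.2 < n
      · rw [if_pos hy', if_pos hy', ih _ hy'.1, ih _ hy'.2]
      · rw [if_neg hy', if_neg hy']

end MulSeq

section Inv
variable {A : Type*} [Ring A] (α : ℕ → A → A → A)

def rinvPhi (f : ℕ → A) (v : A) : (ℕ → A) → ℕ → A := fun g m =>
  if m = 0 then v else
    -(v * (∑ x ∈ Finset.HasAntidiagonal.antidiagonal m, ∑ y ∈ Finset.HasAntidiagonal.antidiagonal x.2,
      if y.2 < m then α x.1 (f y.1) (g y.2) else 0))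

theorem rinvPhi_dep (f : ℕ → A) (v : A) : ∀ (g g' : ℕ → A) m,
    (∀ j, j < m → g j = g' j) → rinvPhi α f v g m = rinvPhi α f v g' m := by
  intro g g' m h
  unfold rinvPhi
  by_cases hm : m = 0
  · simp [hm]
  · rw [if_neg hm, if_neg hm]
    congr 2
    refine Finset.sum_congr rfl fun x hx => Finset.sum_congr rfl fun y hy => ?_
    by_cases hy' : y.2 < m
    · rw [if_pos hy', if_pos hy', h _ hy']
    · rw [if_neg hy', if_neg hy']

def rinvSeq (f : ℕ → A) (v : A) : ℕ → A := build (rinvPhi α f v)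

theorem mulSeq_rinv (hα0 : ∀ a b : A, α 0 a b = a * b) (f : ℕ → A) (v : A)
    (hv : f 0 * v = 1) :
    mulSeq α f (rinvSeq α f v) = fun n => if n = 0 then (1:A) else 0 := by
  funext n
  rcases Nat.eq_zero_or_pos n with hn | hn
  · subst hn
    rw [mulSeq_zero α hα0, if_pos rfl]
    rw [show rinvSeq α f v 0 = v by
      rw [rinvSeq, build_spec _ (rinvPhi_dep α f v), rinvPhi, if_pos rfl]]
    exact hv
  · rw [if_neg (by omega), mulSeq_split_r α hα0 _ _]
    conv_lhs => rw [show rinvSeq α f v n = rinvPhi α f v (rinvSeq α f v) n from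
      build_spec _ (rinvPhi_dep α f v) n]
    rw [rinvPhi, if_neg (by omega), mul_neg, ← mul_assoc, hv, one_mul, neg_add_cancel]

def linvPhi (f : ℕ → A) (v : A) : (ℕ → A) → ℕ → A := fun g m =>
  if m = 0 then v else
    -((∑ x ∈ Finset.HasAntidiagonal.antidiagonal m, ∑ y ∈ Finset.HasAntidiagonal.antidiagonal x.2,
      if y.1 < m then α x.1 (g y.1) (f y.2) else 0) * v)

theorem linvPhi_dep (f : ℕ → A) (v : A) : ∀ (g g' : ℕ → A) m,
    (∀ j, j < m → g j = g' j) → linvPhi α f v g m = linvPhi α f v g' m := by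
  intro g g' m h
  unfold linvPhi
  by_cases hm : m = 0
  · simp [hm]
  · rw [if_neg hm, if_neg hm]
    congr 2
    refine Finset.sum_congr rfl fun x hx => Finset.sum_congr rfl fun y hy => ?_
    by_cases hy' : y.1 < m
    · rw [if_pos hy', if_pos hy', h _ hy']
    · rw [if_neg hy', if_neg hy']

def linvSeq (f : ℕ → A) (v : A) : ℕ → A := build (linvPhi α f v)

theorem mulSeq_linv (hα0 : ∀ a b : A, α 0 a b = a * b) (f : ℕ → A) (v : A)
    (hv : v * f 0 = 1) :
    mulSeq α (linvSeq α f v) f = fun n => if n = 0 then (1:A) else 0 := by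
  funext n
  rcases Nat.eq_zero_or_pos n with hn | hn
  · subst hn
    rw [mulSeq_zero α hα0, if_pos rfl]
    rw [show linvSeq α f v 0 = v by
      rw [linvSeq, build_spec _ (linvPhi_dep α f v), linvPhi, if_pos rfl]]
    exact hv
  · rw [if_neg (by omega), mulSeq_split_l α hα0 _ _]
    conv_lhs => rw [show linvSeq α f v n = linvPhi α f v (linvSeq α f v) n from
      build_spec _ (linvPhi_dep α f v) n]
    rw [linvPhi, if_neg (by omega), neg_mul, mul_assoc, hv, mul_one, add_neg_cancel]

end Inv

end UCaux


theorem uniquelyClean_of_formal_deformation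
    {k A D : Type*} [CommRing k] [Ring A] [Algebra k A] [Ring D]
    (α : ℕ → A → A → A)
    (hα0 : ∀ a b : A, α 0 a b = a * b)
    (haddl : ∀ (i : ℕ) (a a' b : A), α i (a + a') b = α i a b + α i a' b)
    (haddr : ∀ (i : ℕ) (a b b' : A), α i a (b + b') = α i a b + α i a b')
    (hsmull : ∀ (i : ℕ) (c : k) (a b : A), α i (c • a) b = c • α i a b)
    (hsmulr : ∀ (i : ℕ) (c : k) (a b : A), α i a (c • b) = c • α i a b)
    (ι : PowerSeries A ≃ D)
    (hadd : ∀ p q : PowerSeries A, ι (p + q) = ι p + ι q)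
    (hmul : ∀ p q : PowerSeries A,
      ι p * ι q = ι (PowerSeries.mk fun n : ℕ =>
        ∑ x ∈ Finset.HasAntidiagonal.antidiagonal n, ∑ y ∈ Finset.HasAntidiagonal.antidiagonal x.2,
          α x.1 (PowerSeries.coeff (R := A) y.1 p) (PowerSeries.coeff (R := A) y.2 q)))
    (hone : ι 1 = 1)
    (hA : IsUniquelyCleanRing A) :
    IsUniquelyCleanRing D := by
  classical
  let E : PowerSeries A ≃+ D := { ι with map_add' := hadd }
  have hE : ∀ p : PowerSeries A, E p = ι p := fun _ => rfl
  set el : (ℕ → A) → D := fun f => E (PowerSeries.mk f) with hel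
  have hmk : ∀ p : PowerSeries A, PowerSeries.mk (fun n => PowerSeries.coeff (R := A) n p) = p := by
    intro p; ext n; rw [PowerSeries.coeff_mk]
  have hrep : ∀ d : D, el (fun n => PowerSeries.coeff (R := A) n (E.symm d)) = d := by
    intro d; show E _ = d; rw [hmk]; exact E.apply_symm_apply d
  have hel_mul : ∀ f g : ℕ → A, el f * el g = el (UCaux.mulSeq α f g) := by
    intro f g
    show ι (PowerSeries.mk f) * ι (PowerSeries.mk g) = ι (PowerSeries.mk _)
    rw [hmul]
    congr 1
    ext n
    rw [PowerSeries.coeff_mk, PowerSeries.coeff_mk, UCaux.mulSeq]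
    exact Finset.sum_congr rfl fun x hx => Finset.sum_congr rfl fun y hy => by
      rw [PowerSeries.coeff_mk, PowerSeries.coeff_mk]
  have hel_inj : ∀ f g : ℕ → A, el f = el g → f = g := by
    intro f g h
    funext n
    have h2 : PowerSeries.coeff (R := A) n (E.symm (el f)) = PowerSeries.coeff (R := A) n (E.symm (el g)) := by
      rw [h]
    rwa [show E.symm (el f) = PowerSeries.mk f from E.symm_apply_apply _,
      show E.symm (el g) = PowerSeries.mk g from E.symm_apply_apply _,
      PowerSeries.coeff_mk, PowerSeries.coeff_mk] at h2
  have hδ : el (fun n => if n = 0 then (1:A) else 0) = 1 := by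
    show ι (PowerSeries.mk _) = 1
    rw [show PowerSeries.mk (fun n => if n = 0 then (1:A) else 0) = 1 by
      ext n; rw [PowerSeries.coeff_mk, PowerSeries.coeff_one], hone]
  set ε : D → A := fun d => PowerSeries.coeff (R := A) 0 (E.symm d) with hεdef
  have hε_el : ∀ f : ℕ → A, ε (el f) = f 0 := by
    intro f
    show PowerSeries.coeff (R := A) 0 (E.symm (E (PowerSeries.mk f))) = f 0
    rw [E.symm_apply_apply, PowerSeries.coeff_mk]
  have hε_mul : ∀ x y : D, ε (x * y) = ε x * ε y := by
    intro x y
    conv_lhs => rw [← hrep x, ← hrep y]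
    rw [hel_mul, hε_el, UCaux.mulSeq_zero α hα0]
  have hε_one : ε (1 : D) = 1 := by
    rw [← hδ, hε_el]
    simp
  have hε_unit : ∀ x : D, IsUnit x → IsUnit (ε x) := by
    intro x hx
    obtain ⟨u, rfl⟩ := hx
    refine ⟨⟨ε ↑u, ε ↑u⁻¹, ?_, ?_⟩, rfl⟩
    · rw [← hε_mul, u.mul_inv, hε_one]
    · rw [← hε_mul, u.inv_mul, hε_one]
  have hunit_lift : ∀ f : ℕ → A, IsUnit (f 0) → IsUnit (el f) := by
    intro f hf
    obtain ⟨u0, hu0⟩ := hf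
    have hv1 : f 0 * ↑u0⁻¹ = 1 := by rw [← hu0]; exact u0.mul_inv
    have hv2 : (↑u0⁻¹ : A) * f 0 = 1 := by rw [← hu0]; exact u0.inv_mul
    have hR : el f * el (UCaux.rinvSeq α f ↑u0⁻¹) = 1 := by
      rw [hel_mul, UCaux.mulSeq_rinv α hα0 f _ hv1, hδ]
    have hL : el (UCaux.linvSeq α f ↑u0⁻¹) * el f = 1 := by
      rw [hel_mul, UCaux.mulSeq_linv α hα0 f _ hv2, hδ]
    have hLR : el (UCaux.linvSeq α f ↑u0⁻¹) = el (UCaux.rinvSeq α f ↑u0⁻¹) := by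
      calc el (UCaux.linvSeq α f ↑u0⁻¹)
          = el (UCaux.linvSeq α f ↑u0⁻¹) * (el f * el (UCaux.rinvSeq α f ↑u0⁻¹)) := by
            rw [hR, mul_one]
        _ = (el (UCaux.linvSeq α f ↑u0⁻¹) * el f) * el (UCaux.rinvSeq α f ↑u0⁻¹) := by
            rw [mul_assoc]
        _ = el (UCaux.rinvSeq α f ↑u0⁻¹) := by rw [hL, one_mul]
    exact ⟨⟨el f, el (UCaux.rinvSeq α f ↑u0⁻¹), hR, by rw [← hLR]; exact hL⟩, rfl⟩
  intro x
  set f : ℕ → A := fun n => PowerSeries.coeff (R := A) n (E.symm x) with hf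
  have hx : el f = x := hrep x
  obtain ⟨p, ⟨hpe, hpu, hps⟩, -⟩ := hA (f 0)
  have hcent : ∀ z : A, p.1 * z = z * p.1 := fun z => UCaux.central hA hpe z
  set Eb : ℕ → A := UCaux.idemSeq α p.1 with hEbdef
  have hEbIdem : IsIdempotentElem (el Eb) := by
    show el Eb * el Eb = el Eb
    rw [hel_mul, UCaux.idemSeq_isIdem α hα0 hpe hcent]
  have hUrep : x - el Eb = el (fun n => f n - Eb n) := by
    rw [← hx]
    show E _ - E _ = E _
    rw [← map_sub]
    congr 1
  have hU : IsUnit (x - el Eb) := by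
    rw [hUrep]
    apply hunit_lift
    have h0 : f 0 - Eb 0 = p.2 := by
      rw [hEbdef, UCaux.idemSeq_zero, hps, add_sub_cancel_left]
    show IsUnit (f 0 - Eb 0)
    rw [h0]; exact hpu
  refine ⟨(el Eb, x - el Eb), ⟨hEbIdem, hU, by rw [add_sub_cancel]⟩, ?_⟩
  rintro ⟨P, V⟩ ⟨hP, hV, hxPV⟩
  set g : ℕ → A := fun n => PowerSeries.coeff (R := A) n (E.symm P) with hg
  have hPrep : el g = P := hrep P
  have hgmul : UCaux.mulSeq α g g = g := by
    apply hel_inj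
    rw [← hel_mul, hPrep]
    exact hP
  have hgidem : IsIdempotentElem (g 0) := by
    show g 0 * g 0 = g 0
    have := congrFun hgmul 0
    rwa [UCaux.mulSeq_zero α hα0] at this
  have hεx1 : ε x = g 0 + ε V := by
    rw [hxPV]
    show PowerSeries.coeff (R := A) 0 (E.symm (P + V)) = _
    rw [map_add, map_add]
  have hεx2 : ε x = p.1 + p.2 := by
    show f 0 = p.1 + p.2
    exact hps
  have huni := UCaux.unique hA hgidem (hε_unit V hV) hpe hpu hεx1 hεx2
  have hgEb : g = Eb := UCaux.idem_unique α hα0 hpe hcent g hgmul huni.1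
  have hPE : P = el Eb := by rw [← hPrep, hgEb]
  refine Prod.ext hPE ?_
  show V = x - el Eb
  rw [← hPE, hxPV]
  abel
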